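/- Let I be a group, ε : I → {±1} a surjective group homomorphism with kernel J, and A a 2-divisible abelian group (multiplication by 2 is surjective) on which I acts by g • a = ε(g)·a. Then I acts trivially on A[2], so H¹(I, A[2]) = Hom(I, A[2]), and under this identification the kernel of the natural map H¹(I, A[2]) → H¹(I, A) induced by the inclusion A[2] ↪ A is exactly the set of group homomorphisms I → A[2] that vanish on J (equivalently, the image of the inflation map from the order-2 quotient I/J). -/

import Mathlib

namespace SelmerCompanion

variable (G : Type) [Group G]

/-- The group of 1-cocycles `G → A` (nonabelian convention `f (g*h) = g • f h + f g`). -/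
def cocycles (A : Type) [AddCommGroup A] [DistribMulAction G A] : AddSubgroup (G → A) where
  carrier := {f | ∀ g h : G, f (g * h) = g • f h + f g}
  zero_mem' := by intro g h; simp
  add_mem' := by
    intro f₁ f₂ h₁ h₂ g h
    simp only [Pi.add_apply, h₁ g h, h₂ g h, smul_add]
    abel
  neg_mem' := by
    intro f hf g h
    simp only [Pi.neg_apply, hf g h, smul_neg]
    abel

theorem mem_cocycles {A : Type} [AddCommGroup A] [DistribMulAction G A] {f : G → A} :
    f ∈ cocycles G A ↔ ∀ g h : G, f (g * h) = g • f h + f g := Iff.rfl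

/-- The subgroup of 1-coboundaries inside the 1-cocycles. -/
def coboundaries (A : Type) [AddCommGroup A] [DistribMulAction G A] :
    AddSubgroup (cocycles G A) where
  carrier := {f | ∃ a : A, ∀ g : G, (f : G → A) g = g • a - a}
  zero_mem' := ⟨0, by simp⟩
  add_mem' := by
    rintro f₁ f₂ ⟨a, ha⟩ ⟨b, hb⟩
    refine ⟨a + b, fun g => ?_⟩
    simp only [AddSubgroup.coe_add, Pi.add_apply, ha g, hb g, smul_add]
    abel
  neg_mem' := by
    rintro f ⟨a, ha⟩
    refine ⟨-a, fun g => ?_⟩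
    simp only [AddSubgroup.coe_neg, Pi.neg_apply, ha g, smul_neg]
    abel

/-- First group cohomology: 1-cocycles modulo 1-coboundaries. -/
def H1 (A : Type) [AddCommGroup A] [DistribMulAction G A] :=
  cocycles G A ⧸ coboundaries G A

instance (A : Type) [AddCommGroup A] [DistribMulAction G A] : AddCommGroup (H1 G A) :=
  inferInstanceAs (AddCommGroup (_ ⧸ _))

/-- The map on 1-cocycles induced by a `G`-equivariant additive map. -/
def cocyclesMap {A B : Type} [AddCommGroup A] [DistribMulAction G A]
    [AddCommGroup B] [DistribMulAction G B]
    (φ : A →+ B) (hφ : ∀ (g : G) (a : A), φ (g • a) = g • φ a) :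
    cocycles G A →+ cocycles G B where
  toFun f := ⟨fun g => φ ((f : G → A) g), by
    intro g h
    simp only [f.2 g h, map_add, hφ]⟩
  map_zero' := by
    apply Subtype.ext
    funext g
    simp
  map_add' f₁ f₂ := by
    apply Subtype.ext
    funext g
    simp

/-- The map on first cohomology induced by a `G`-equivariant additive map. -/
def H1Map {A B : Type} [AddCommGroup A] [DistribMulAction G A]
    [AddCommGroup B] [DistribMulAction G B]
    (φ : A →+ B) (hφ : ∀ (g : G) (a : A), φ (g • a) = g • φ a) :
    H1 G A →+ H1 G B :=
  QuotientAddGroup.map _ _ (cocyclesMap G φ hφ) (by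
    rintro f ⟨a, ha⟩
    exact ⟨φ a, fun g => by simp [cocyclesMap, ha g, hφ]⟩)

/-- The 2-torsion subgroup `A[2] = {a : 2a = 0}`. -/
def twoTorsion (A : Type) [AddCommGroup A] : AddSubgroup A where
  carrier := {a | 2 • a = 0}
  zero_mem' := by simp
  add_mem' := by
    intro a b ha hb
    simp only [Set.mem_setOf_eq] at *
    rw [smul_add, ha, hb, add_zero]
  neg_mem' := by
    intro a ha
    simp only [Set.mem_setOf_eq] at *
    rw [smul_neg, ha, neg_zero]

theorem mem_twoTorsion {A : Type} [AddCommGroup A] {a : A} :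
    a ∈ twoTorsion A ↔ 2 • a = 0 := Iff.rfl

instance twoTorsionAction (A : Type) [AddCommGroup A] [DistribMulAction G A] :
    DistribMulAction G (twoTorsion A) where
  smul g a := ⟨g • (a : A), by
    have ha : 2 • (a : A) = 0 := a.2
    show 2 • (g • (a : A)) = 0
    rw [← smul_comm g (2 : ℕ) (a : A), ha, smul_zero]⟩
  one_smul a := Subtype.ext (one_smul G (a : A))
  mul_smul g h a := Subtype.ext (mul_smul g h (a : A))
  smul_zero g := Subtype.ext (smul_zero g)
  smul_add g a b := Subtype.ext (smul_add g (a : A) (b : A))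

@[simp] theorem twoTorsion_coe_smul {A : Type} [AddCommGroup A] [DistribMulAction G A]
    (g : G) (a : twoTorsion A) : ((g • a : twoTorsion A) : A) = g • (a : A) := rfl

/-- The subgroup of `G`-invariants of `A`. -/
def invariants (A : Type) [AddCommGroup A] [DistribMulAction G A] : AddSubgroup A where
  carrier := {a | ∀ g : G, g • a = a}
  zero_mem' := fun g => smul_zero g
  add_mem' := by
    intro a b ha hb g
    rw [smul_add, ha g, hb g]
  neg_mem' := by
    intro a ha g
    rw [smul_neg, ha g]

theorem mem_invariants {A : Type} [AddCommGroup A] [DistribMulAction G A] {a : A} :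
    a ∈ invariants G A ↔ ∀ g : G, g • a = a := Iff.rfl


/-- Let `ε : I → {±1}` be a surjective homomorphism with kernel `J`, acting on a 2-divisible
abelian group `A` by `g • a = ε(g) • a`.  Then `I` acts trivially on `A[2]` (so
`H¹(I, A[2]) = Hom(I, A[2])`, i.e. the 1-cocycles are exactly the homomorphisms), and under
this identification the kernel of the natural map `H¹(I, A[2]) → H¹(I, A)` consists exactly
of the homomorphisms `I → A[2]` vanishing on `J`. -/
theorem statement7 (I : Type) [Group I] (ε : I →* ℤˣ) (hsurj : Function.Surjective ε)
    (A : Type) [AddCommGroup A] [DistribMulAction I A]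
    (hact : ∀ (g : I) (a : A), g • a = (ε g : ℤ) • a)
    (hdiv : ∀ a : A, ∃ b : A, 2 • b = a) :
    (∀ (g : I) (a : twoTorsion A), g • a = a) ∧
    (∀ f : I → twoTorsion A,
      f ∈ cocycles I (twoTorsion A) ↔ ∀ g h : I, f (g * h) = f g + f h) ∧
    (∀ f : cocycles I (twoTorsion A),
      (QuotientAddGroup.mk f : H1 I (twoTorsion A)) ∈
          (H1Map I (twoTorsion A).subtype (fun _ _ => rfl)).ker ↔
        ∀ g ∈ ε.ker, (f : I → twoTorsion A) g = 0) := by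
  have htriv : ∀ (g : I) (a : twoTorsion A), g • a = a := by
    intro g a
    apply Subtype.ext
    show g • (a : A) = a
    rw [hact]
    rcases Int.units_eq_one_or (ε g) with h | h <;> rw [h]
    · simp
    · have ha : (a : A) + a = 0 := by
        have := mem_twoTorsion.mp a.2; rwa [two_nsmul] at this
      simpa using neg_eq_of_add_eq_zero_left ha
  refine ⟨htriv, ?_, ?_⟩
  · intro f
    constructor
    · intro hf g h; rw [hf g h, htriv, add_comm]
    · intro hf g h; rw [hf g h, htriv, add_comm]
  · intro f
    have hker : (QuotientAddGroup.mk f : H1 I (twoTorsion A)) ∈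
        (H1Map I (twoTorsion A).subtype (fun _ _ => rfl)).ker ↔
        (∃ a : A, ∀ g : I, ((f : I → twoTorsion A) g : A) = g • a - a) := by
      refine Iff.trans AddMonoidHom.mem_ker ?_
      show (QuotientAddGroup.mk _ : H1 I A) = 0 ↔ _
      rw [QuotientAddGroup.eq_zero_iff]
      exact Iff.rfl
    rw [hker]
    constructor
    · rintro ⟨a, ha⟩ g hg
      apply Subtype.ext
      have := ha g
      rw [hact, hg, Units.val_one, one_smul, sub_self] at this
      simpa using this
    · intro hvan
      rcases hsurj (-1) with ⟨s, hs⟩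
      rcases hdiv ((f : I → twoTorsion A) s : A) with ⟨b, hb⟩
      refine ⟨-b, fun g => ?_⟩
      rw [hact]
      rcases Int.units_eq_one_or (ε g) with h | h <;> rw [h]
      · have : g ∈ ε.ker := h
        rw [hvan g this]
        simp
      · -- ε g = -1, so s⁻¹ * g ∈ ker ε and f g = f s
        have hmem : s⁻¹ * g ∈ ε.ker := by
          simp [MonoidHom.mem_ker, hs, h]
        have hfg : (f : I → twoTorsion A) g = (f : I → twoTorsion A) s := by
          have hc := f.2 s (s⁻¹ * g)
          rw [mul_inv_cancel_left, htriv, hvan _ hmem, zero_add] at hc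
          exact hc
        rw [hfg]
        simp only [Units.val_neg, Units.val_one, neg_smul, one_smul, neg_neg]
        rw [← hb, two_smul]
        abel

end SelmerCompanion
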